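/- Let F be a finite set of monomials of the same degree d ≥ 2 in k[x_1,...,x_n]. If the log-matrix A has rank n and the linear syzygy matrix LS(F) has rank q - 1, then k[F] ⊆ k[x_d] is a birational extension. -/

import Mathlib

open MvPolynomial

/-- The fraction field (inside `Frac(k[x])`) of the subalgebra generated by a set of
polynomials. -/
noncomputable def fractionFieldOf (n : ℕ) (k : Type*) [Field k]
    (S : Set (MvPolynomial (Fin n) k)) :
    Subfield (FractionRing (MvPolynomial (Fin n) k)) :=
  Subfield.closure
    ((algebraMap (MvPolynomial (Fin n) k) (FractionRing (MvPolynomial (Fin n) k))) ''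
      (Algebra.adjoin k S : Set (MvPolynomial (Fin n) k)))

section Aux

variable {n : ℕ} {k : Type*} [Field k]

lemma fractionFieldOf_mono {S T : Set (MvPolynomial (Fin n) k)} (h : S ⊆ T) :
    fractionFieldOf n k S ≤ fractionFieldOf n k T :=
  Subfield.closure_mono (Set.image_mono (Algebra.adjoin_mono h))

lemma mem_fractionFieldOf_of_mem_adjoin {S : Set (MvPolynomial (Fin n) k)}
    {x : MvPolynomial (Fin n) k} (hx : x ∈ Algebra.adjoin k S) :
    algebraMap _ (FractionRing (MvPolynomial (Fin n) k)) x ∈ fractionFieldOf n k S :=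
  Subfield.subset_closure (Set.mem_image_of_mem _ hx)

lemma fractionFieldOf_le {S T : Set (MvPolynomial (Fin n) k)}
    (h : ∀ p ∈ T,
      algebraMap (MvPolynomial (Fin n) k) (FractionRing (MvPolynomial (Fin n) k)) p ∈
        fractionFieldOf n k S) :
    fractionFieldOf n k T ≤ fractionFieldOf n k S := by
  apply Subfield.closure_le.2
  rintro _ ⟨x, hx, rfl⟩
  induction hx using Algebra.adjoin_induction with
  | mem x hx => exact h x hx
  | algebraMap r => exact mem_fractionFieldOf_of_mem_adjoin (Subalgebra.algebraMap_mem _ r)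
  | add x y hx hy px py => rw [RingHom.map_add]; exact add_mem px py
  | mul x y hx hy px py => rw [RingHom.map_mul]; exact mul_mem px py

end Aux

open scoped Classical in
lemma rank_graph_connected {k : Type*} [Field k] {n q : ℕ} {ι : Type*} [Fintype ι]
    (v : Fin q → (Fin n →₀ ℕ))
    (LS : Matrix (Fin q) ι (MvPolynomial (Fin n) k))
    (e₁ e₂ : ι → Fin n) (c₁ c₂ : ι → Fin q)
    (hprop : ∀ t, Finsupp.single (e₁ t) 1 + v (c₁ t) = Finsupp.single (e₂ t) 1 + v (c₂ t))
    (hLS : ∀ t j, LS j t =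
      (if j = c₁ t then X (e₁ t) else 0) - (if j = c₂ t then X (e₂ t) else 0))
    (hrankLS : LS.rank = q - 1)
    (j0 j1 : Fin q) : Relation.EqvGen (fun a b => ∃ t, c₁ t = a ∧ c₂ t = b) j0 j1 := by
  classical
  set rel : Fin q → Fin q → Prop := fun a b => ∃ t, c₁ t = a ∧ c₂ t = b with hrel
  by_contra hj
  have hne : j0 ≠ j1 := by rintro rfl; exact hj (Relation.EqvGen.refl _)
  have hq2 : 2 ≤ q := by
    have h0 := j0.isLt; have h1 := j1.isLt
    have : (j0 : ℕ) ≠ (j1 : ℕ) := fun h => hne (Fin.ext h)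
    omega
  set S : Set (Fin q) := {j | Relation.EqvGen rel j0 j} with hS
  have hj0S : j0 ∈ S := Relation.EqvGen.refl _
  have hj1S : j1 ∉ S := hj
  have hS_edge : ∀ t, (c₁ t ∈ S ↔ c₂ t ∈ S) := by
    intro t
    have hr : Relation.EqvGen rel (c₁ t) (c₂ t) := Relation.EqvGen.rel _ _ ⟨t, rfl, rfl⟩
    exact ⟨fun h => Relation.EqvGen.trans _ _ _ h hr,
      fun h => Relation.EqvGen.trans _ _ _ h (Relation.EqvGen.symm _ _ hr)⟩
  set uS : Fin q → MvPolynomial (Fin n) k := fun j => if j ∈ S then monomial (v j) 1 else 0 with huS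
  set uT : Fin q → MvPolynomial (Fin n) k := fun j => if j ∈ S then 0 else monomial (v j) 1 with huT
  set φ : (Fin q → MvPolynomial (Fin n) k) →ₗ[MvPolynomial (Fin n) k] MvPolynomial (Fin n) k × MvPolynomial (Fin n) k :=
    { toFun := fun g => (dotProduct uS g, dotProduct uT g)
      map_add' := by
        intro a b
        simp [dotProduct, mul_add, Finset.sum_add_distrib, Prod.ext_iff]
      map_smul' := by
        intro c a
        simp [dotProduct, Finset.mul_sum, smul_eq_mul, mul_left_comm, Prod.ext_iff] } with hφ
  -- each column of LS dotted with uS and uT gives 0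
  have hdot : ∀ (u : Fin q → MvPolynomial (Fin n) k) (t : ι),
      dotProduct u (fun j => LS j t) = u (c₁ t) * X (e₁ t) - u (c₂ t) * X (e₂ t) := by
    intro u t
    simp only [dotProduct, hLS, mul_sub, mul_ite, mul_zero]
    rw [Finset.sum_sub_distrib]
    congr 1 <;> simp
  have hmoneq : ∀ t : ι, (monomial (v (c₁ t)) (1 : k)) * X (e₁ t)
      = monomial (v (c₂ t)) 1 * X (e₂ t) := by
    intro t
    rw [X, X, monomial_mul, monomial_mul]
    congr 1
    rw [add_comm, hprop t, add_comm]
  have hcolS : ∀ t, dotProduct uS (fun j => LS j t) = 0 := by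
    intro t
    rw [hdot]
    by_cases hc : c₁ t ∈ S
    · have hc2 : c₂ t ∈ S := (hS_edge t).1 hc
      simp only [huS, if_pos hc, if_pos hc2]
      rw [hmoneq t, sub_self]
    · have hc2 : c₂ t ∉ S := fun h => hc ((hS_edge t).2 h)
      simp [huS, if_neg hc, if_neg hc2]
  have hcolT : ∀ t, dotProduct uT (fun j => LS j t) = 0 := by
    intro t
    rw [hdot]
    by_cases hc : c₁ t ∈ S
    · have hc2 : c₂ t ∈ S := (hS_edge t).1 hc
      simp [huT, if_pos hc, if_pos hc2]
    · have hc2 : c₂ t ∉ S := fun h => hc ((hS_edge t).2 h)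
      simp only [huT, if_neg hc, if_neg hc2]
      rw [hmoneq t, sub_self]
  have hspan : Submodule.span (MvPolynomial (Fin n) k) (Set.range LS.transpose) ≤ LinearMap.ker φ := by
    rw [Submodule.span_le]
    rintro _ ⟨t, rfl⟩
    simp only [SetLike.mem_coe, LinearMap.mem_ker, hφ]
    show (dotProduct uS (LS.transpose t), dotProduct uT (LS.transpose t)) = (0, 0)
    rw [show (LS.transpose t) = fun j => LS j t from rfl, hcolS t, hcolT t]
  -- rank inequalities
  have h1 : (q - 1 : ℕ) = Module.finrank (MvPolynomial (Fin n) k) (Submodule.span (MvPolynomial (Fin n) k) (Set.range LS.transpose)) := by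
    rw [← hrankLS]; exact LS.rank_eq_finrank_span_cols
  have hqR : Module.rank (MvPolynomial (Fin n) k) (Fin q → MvPolynomial (Fin n) k) = (q : Cardinal) := by
    rw [rank_fun']; simp
  have hker_lt : Module.rank (MvPolynomial (Fin n) k) (LinearMap.ker φ) < Cardinal.aleph0 :=
    lt_of_le_of_lt (Submodule.rank_le _) (by rw [hqR]; exact Cardinal.nat_lt_aleph0 q)
  -- two independent vectors in the range of φ
  have hm0 : (monomial (v j0) (1 : k) : MvPolynomial (Fin n) k) ≠ 0 := by simp
  have hm1 : (monomial (v j1) (1 : k) : MvPolynomial (Fin n) k) ≠ 0 := by simp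
  have hmem0 : ((monomial (v j0) 1 : MvPolynomial (Fin n) k), (0 : MvPolynomial (Fin n) k)) ∈ LinearMap.range φ := by
    refine ⟨Pi.single j0 1, ?_⟩
    simp only [hφ, LinearMap.coe_mk, AddHom.coe_mk]
    show (dotProduct uS (Pi.single j0 1), dotProduct uT (Pi.single j0 1)) = _
    rw [dotProduct_single, dotProduct_single]
    simp [huS, huT, hj0S]
  have hmem1 : ((0 : MvPolynomial (Fin n) k), (monomial (v j1) 1 : MvPolynomial (Fin n) k)) ∈ LinearMap.range φ := by
    refine ⟨Pi.single j1 1, ?_⟩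
    simp only [hφ, LinearMap.coe_mk, AddHom.coe_mk]
    show (dotProduct uS (Pi.single j1 1), dotProduct uT (Pi.single j1 1)) = _
    rw [dotProduct_single, dotProduct_single]
    simp [huS, huT, hj1S]
  have hli : LinearIndependent (MvPolynomial (Fin n) k)
      (![⟨_, hmem0⟩, ⟨_, hmem1⟩] : Fin 2 → LinearMap.range φ) := by
    apply LinearIndependent.of_comp (LinearMap.range φ).subtype
    have hamb : ((LinearMap.range φ).subtype ∘ ![⟨_, hmem0⟩, ⟨_, hmem1⟩])
        = ![((monomial (v j0) 1 : MvPolynomial (Fin n) k), (0 : MvPolynomial (Fin n) k)), ((0 : MvPolynomial (Fin n) k), (monomial (v j1) 1 : MvPolynomial (Fin n) k))] := by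
      funext i; fin_cases i <;> rfl
    rw [hamb]
    rw [Fintype.linearIndependent_iff]
    intro c hc
    rw [Fin.sum_univ_two] at hc
    simp only [Matrix.cons_val_zero, Matrix.cons_val_one, Matrix.head_cons, Prod.smul_mk,
      Prod.mk_add_mk, Prod.mk_eq_zero, smul_eq_mul, mul_zero, add_zero, zero_add] at hc
    have h0 : c 0 = 0 := by
      rcases mul_eq_zero.1 hc.1 with h | h
      · exact h
      · exact absurd h hm0
    have h1 : c 1 = 0 := by
      rcases mul_eq_zero.1 hc.2 with h | h
      · exact h
      · exact absurd h hm1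
    intro i; fin_cases i <;> assumption
  have hrange2 : (2 : Cardinal) ≤ Module.rank (MvPolynomial (Fin n) k) (LinearMap.range φ) := by
    simpa using hli.cardinal_lift_le_rank
  have hsum : Module.rank (MvPolynomial (Fin n) k) (LinearMap.range φ) + Module.rank (MvPolynomial (Fin n) k) (LinearMap.ker φ)
      = (q : Cardinal) := by
    rw [LinearMap.rank_range_add_rank_ker φ, hqR]
  have h2 : (q - 1 : ℕ) ≤ Cardinal.toNat (Module.rank (MvPolynomial (Fin n) k) (LinearMap.ker φ)) := by
    rw [h1]
    exact Cardinal.toNat_le_toNat (Submodule.rank_mono hspan) hker_lt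
  have h3 : Cardinal.toNat (Module.rank (MvPolynomial (Fin n) k) (LinearMap.ker φ)) + 2 ≤ q := by
    have hc : Module.rank (MvPolynomial (Fin n) k) (LinearMap.ker φ) + 2 ≤ (q : Cardinal) := by
      rw [← hsum, add_comm]
      exact add_le_add_left hrange2 _
    have := Cardinal.toNat_le_toNat hc (Cardinal.nat_lt_aleph0 q)
    rwa [Cardinal.toNat_add hker_lt (by exact_mod_cast Cardinal.nat_lt_aleph0 2), Cardinal.toNat_natCast,
      Cardinal.toNat_ofNat] at this
  omega

lemma exists_nat_comb {n q d : ℕ} {ι : Type*} (hn : 0 < n)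
    (v : Fin q → (Fin n →₀ ℕ)) (hdeg : ∀ j, ∑ i, v j i = d)
    (e₁ e₂ : ι → Fin n) (c₁ c₂ : ι → Fin q)
    (hprop : ∀ t, Finsupp.single (e₁ t) 1 + v (c₁ t) = Finsupp.single (e₂ t) 1 + v (c₂ t))
    (hconn : ∀ i i' : Fin n, Relation.EqvGen (fun a b => ∃ t, e₁ t = a ∧ e₂ t = b) i i')
    (j₀ : Fin q)
    (w : Fin n →₀ ℕ) (hw : ∑ i, w i = d) :
    ∃ p N : Fin q → ℕ, w + ∑ j, N j • v j = ∑ j, p j • v j := by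
  classical
  set V : Fin q → (Fin n → ℤ) := fun j i => (v j i : ℤ) with hV
  set Sp := Submodule.span ℤ (Set.range V) with hSp
  have hsingle : ∀ e : Fin n, (fun i => ((Finsupp.single e 1 : Fin n →₀ ℕ) i : ℤ)) = Pi.single e 1 := by
    intro e; funext i
    rcases eq_or_ne i e with rfl | h
    · simp [Finsupp.single_apply, Pi.single_apply]
    · simp [Finsupp.single_apply, Pi.single_apply, h, Ne.symm h]
  have hedge : ∀ t, (Pi.single (e₁ t) 1 - Pi.single (e₂ t) 1 : Fin n → ℤ) ∈ Sp := by
    intro t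
    have h : (Pi.single (e₁ t) 1 : Fin n → ℤ) + V (c₁ t) = (Pi.single (e₂ t) 1) + V (c₂ t) := by
      rw [← hsingle, ← hsingle]
      funext i
      have h0 := congrArg (fun f : Fin n →₀ ℕ => f i) (hprop t)
      simp only [Finsupp.add_apply] at h0
      simp only [Pi.add_apply, hV]
      exact_mod_cast h0
    have h' : (Pi.single (e₁ t) 1 - Pi.single (e₂ t) 1 : Fin n → ℤ) = V (c₂ t) - V (c₁ t) := by
      rw [sub_eq_sub_iff_add_eq_add, h, add_comm]
    rw [h']
    exact sub_mem (Submodule.subset_span ⟨c₂ t, rfl⟩) (Submodule.subset_span ⟨c₁ t, rfl⟩)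
  have hdiff : ∀ i i' : Fin n, (Pi.single i 1 - Pi.single i' 1 : Fin n → ℤ) ∈ Sp := by
    intro i i'
    induction hconn i i' with
    | rel a b h => obtain ⟨t, rfl, rfl⟩ := h; exact hedge t
    | refl a => simp
    | symm a b h ih => simpa using Sp.neg_mem ih
    | trans a b c h1 h2 ih1 ih2 => simpa using Sp.add_mem ih1 ih2
  have hwmem : (fun i => (w i : ℤ)) ∈ Sp := by
    set u : Fin n → ℤ := fun i => (w i : ℤ) - V j₀ i with hu
    have hsum0 : ∑ i, u i = 0 := by
      simp only [hu, hV]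
      rw [Finset.sum_sub_distrib, ← Nat.cast_sum, ← Nat.cast_sum, hw, hdeg j₀, sub_self]
    set i₀ : Fin n := ⟨0, hn⟩
    have hrepr : u = ∑ i, u i • (Pi.single i 1 - Pi.single i₀ 1 : Fin n → ℤ) := by
      have : ∑ i, u i • (Pi.single i 1 - Pi.single i₀ 1 : Fin n → ℤ)
          = (∑ i, u i • (Pi.single i 1 : Fin n → ℤ)) - (∑ i, u i) • (Pi.single i₀ 1 : Fin n → ℤ) := by
        simp only [smul_sub]
        rw [Finset.sum_sub_distrib, ← Finset.sum_smul]
      rw [this, hsum0, zero_smul, sub_zero]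
      funext i'
      simp only [Finset.sum_apply, Pi.smul_apply, Pi.single_apply, smul_eq_mul, mul_ite,
        mul_one, mul_zero]
      rw [Finset.sum_ite_eq Finset.univ i' u]
      simp
    have humem : u ∈ Sp := by
      rw [hrepr]
      exact Submodule.sum_mem _ fun i _ => Submodule.smul_mem _ _ (hdiff i i₀)
    have hadd := Sp.add_mem humem (Submodule.subset_span (Set.mem_range_self j₀))
    have heq : (fun i => (w i : ℤ)) = u + V j₀ := by funext i; simp [hu]
    rwa [heq]
  rw [hSp] at hwmem
  obtain ⟨c, hc⟩ := Finsupp.mem_span_range_iff_exists_finsupp.1 hwmem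
  rw [Finsupp.sum_fintype] at hc
  · refine ⟨fun j => (c j).toNat, fun j => (-c j).toNat, ?_⟩
    ext i
    have hci : ∑ j, c j * V j i = (w i : ℤ) := by
      have := congrFun hc i
      simpa [Finset.sum_apply] using this
    have hsplit : ∀ j : Fin q, ((c j).toNat : ℤ) = ((-c j).toNat : ℤ) + c j := by
      intro j; omega
    have hZ : ((w i : ℤ)) + ∑ j, ((-c j).toNat : ℤ) * V j i = ∑ j, ((c j).toNat : ℤ) * V j i := by
      calc ((w i : ℤ)) + ∑ j, ((-c j).toNat : ℤ) * V j i
          = ∑ j, c j * V j i + ∑ j, ((-c j).toNat : ℤ) * V j i := by rw [hci]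
        _ = ∑ j, (((-c j).toNat : ℤ) + c j) * V j i := by
            rw [← Finset.sum_add_distrib]
            exact Finset.sum_congr rfl fun j _ => by ring
        _ = ∑ j, ((c j).toNat : ℤ) * V j i := by
            exact Finset.sum_congr rfl fun j _ => by rw [hsplit j]
    have hgoal : (w i + ∑ j, (-c j).toNat * v j i) = ∑ j, (c j).toNat * v j i := by
      have := hZ
      simp only [hV] at this
      exact_mod_cast this
    simpa [Finsupp.add_apply, Finsupp.finset_sum_apply, Finsupp.smul_apply, smul_eq_mul]
      using hgoal
  · intro j; simp

lemma var_connected {n q d : ℕ} {ι : Type*}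
    (hd : 2 ≤ d) (hq : 0 < q)
    (v : Fin q → (Fin n →₀ ℕ)) (hdeg : ∀ j, ∑ i, v j i = d)
    (e₁ e₂ : ι → Fin n) (c₁ c₂ : ι → Fin q)
    (hprop : ∀ t, Finsupp.single (e₁ t) 1 + v (c₁ t) = Finsupp.single (e₂ t) 1 + v (c₂ t))
    (hqconn : ∀ j l : Fin q, Relation.EqvGen (fun a b => ∃ t, c₁ t = a ∧ c₂ t = b) j l)
    (hrankA : (Matrix.of fun (i : Fin n) (j : Fin q) => ((v j) i : ℚ)).rank = n)
    (i₀ i₁ : Fin n) : Relation.EqvGen (fun a b => ∃ t, e₁ t = a ∧ e₂ t = b) i₀ i₁ := by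
  classical
  -- injectivity from the rank of the log-matrix
  have hAinj : ∀ b : Fin n → ℚ, (∀ j, ∑ i, b i * ((v j i : ℕ) : ℚ) = 0) → b = 0 := by
    intro b hb
    set A := Matrix.of fun (i : Fin n) (j : Fin q) => ((v j i : ℚ)) with hA
    have hker : A.transpose.mulVecLin b = 0 := by
      ext j
      simpa [Matrix.mulVecLin, Matrix.mulVec, Matrix.vecMul, dotProduct, hA, Matrix.transpose_apply,
        mul_comm] using hb j
    have h1 : A.transpose.rank = n := by rw [Matrix.rank_transpose]; exact hrankA
    have h2 : LinearMap.ker A.transpose.mulVecLin = ⊥ := by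
      have h3 := LinearMap.finrank_range_add_finrank_ker A.transpose.mulVecLin
      have h4 : Module.finrank ℚ (Fin n → ℚ) = n := by simp
      rw [h4] at h3
      have h5 : Module.finrank ℚ (LinearMap.range A.transpose.mulVecLin) = n := h1
      rw [h5] at h3
      have h6 : Module.finrank ℚ (LinearMap.ker A.transpose.mulVecLin) = 0 := by omega
      exact Submodule.finrank_eq_zero.1 h6
    have hmem : b ∈ LinearMap.ker A.transpose.mulVecLin := hker
    rw [h2] at hmem
    simpa using hmem
  -- weighted sums are constant along the syzygy graph
  have hBconst : ∀ (a : Fin n → ℚ), (∀ t : ι, a (e₁ t) = a (e₂ t)) →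
      ∀ j l : Fin q, ∑ i, a i * (v j i : ℚ) = ∑ i, a i * (v l i : ℚ) := by
    intro a ha j l
    have hsingle : ∀ (e : Fin n) (j : Fin q),
        ∑ i, a i * ((((Finsupp.single e 1 + v j : Fin n →₀ ℕ)) i : ℕ) : ℚ) = a e + ∑ i, a i * (v j i : ℚ) := by
      intro e j
      simp only [Finsupp.add_apply, Finsupp.single_apply]
      push_cast
      simp only [mul_add, Finset.sum_add_distrib, mul_ite, mul_one, mul_zero]
      rw [Finset.sum_ite_eq]
      simp
    have hedge : ∀ t : ι, ∑ i, a i * (v (c₁ t) i : ℚ) = ∑ i, a i * (v (c₂ t) i : ℚ) := by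
      intro t
      have h1 : ∑ i, a i * ((((Finsupp.single (e₁ t) 1 + v (c₁ t) : Fin n →₀ ℕ)) i : ℕ) : ℚ)
          = ∑ i, a i * ((((Finsupp.single (e₂ t) 1 + v (c₂ t) : Fin n →₀ ℕ)) i : ℕ) : ℚ) :=
        Finset.sum_congr rfl fun i _ => by rw [hprop t]
      rw [hsingle, hsingle, ha t] at h1
      exact add_left_cancel h1
    induction hqconn j l with
    | rel x y h => obtain ⟨t, rfl, rfl⟩ := h; exact hedge t
    | refl x => rfl
    | symm x y h ih => exact ih.symm
    | trans x y z h1 h2 ih1 ih2 => exact ih1.trans ih2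
  -- the indicator of the equivalence class of i₀
  set S : Set (Fin n) := {i | Relation.EqvGen (fun a b => ∃ t, e₁ t = a ∧ e₂ t = b) i₀ i} with hS
  have hi₀S : i₀ ∈ S := Relation.EqvGen.refl _
  by_contra hi₁
  have hi₁' : i₁ ∉ S := hi₁
  set a : Fin n → ℚ := fun i => if i ∈ S then 1 else 0 with ha
  have haedge : ∀ t : ι, a (e₁ t) = a (e₂ t) := by
    intro t
    have hr : Relation.EqvGen (fun a b => ∃ t, e₁ t = a ∧ e₂ t = b) (e₁ t) (e₂ t) :=
      Relation.EqvGen.rel _ _ ⟨t, rfl, rfl⟩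
    by_cases h : e₁ t ∈ S
    · have h2 : e₂ t ∈ S := Relation.EqvGen.trans _ _ _ h hr
      simp [ha, h, h2]
    · have h2 : e₂ t ∉ S := fun hh =>
        h (Relation.EqvGen.trans _ _ _ hh (Relation.EqvGen.symm _ _ hr))
      simp [ha, h, h2]
  set j₀ : Fin q := ⟨0, hq⟩ with hj₀
  set cst : ℚ := ∑ i, a i * (v j₀ i : ℚ) with hcst
  have hconst : ∀ j, ∑ i, a i * (v j i : ℚ) = cst := fun j => hBconst a haedge j j₀
  set b : Fin n → ℚ := fun i => (d : ℚ) * a i - cst with hb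
  have hbz : ∀ j, ∑ i, b i * (v j i : ℚ) = 0 := by
    intro j
    have hσ : ∑ i, ((v j i : ℕ) : ℚ) = (d : ℚ) := by rw [← Nat.cast_sum, hdeg j]
    calc ∑ i, b i * (v j i : ℚ)
        = (d:ℚ) * (∑ i, a i * (v j i:ℚ)) - cst * ∑ i, ((v j i : ℕ) : ℚ) := by
          rw [Finset.mul_sum, Finset.mul_sum, ← Finset.sum_sub_distrib]
          exact Finset.sum_congr rfl fun i _ => by rw [hb]; ring
      _ = 0 := by rw [hconst j, hσ]; ring
  have hb0 := hAinj b hbz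
  have h1 : cst = d := by
    have h := congrFun hb0 i₀
    rw [hb] at h
    simp only [ha, if_pos hi₀S] at h
    simp at h
    linarith
  have h2 := congrFun hb0 i₁
  rw [hb] at h2
  simp only [ha, if_neg hi₁'] at h2
  simp [h1] at h2
  have : d = 0 := by exact_mod_cast h2
  omega

lemma key_membership (n q d : ℕ) (hd : 2 ≤ d) (k : Type*) [Field k]
    (v : Fin q → (Fin n →₀ ℕ))
    (hdeg : ∀ j, ∑ i, v j i = d)
    [Fintype {t : (Fin n × Fin n) × (Fin q × Fin q) //
        Finsupp.single t.1.1 1 + v t.2.1 = Finsupp.single t.1.2 1 + v t.2.2}]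
    (LS : Matrix (Fin q)
      {t : (Fin n × Fin n) × (Fin q × Fin q) //
        Finsupp.single t.1.1 1 + v t.2.1 = Finsupp.single t.1.2 1 + v t.2.2}
      (MvPolynomial (Fin n) k))
    (hLS : ∀ t j, LS j t =
      (if j = t.1.2.1 then X t.1.1.1 else 0) - (if j = t.1.2.2 then X t.1.1.2 else 0))
    (hrankA : (Matrix.of fun (i : Fin n) (j : Fin q) => ((v j) i : ℚ)).rank = n)
    (hrankLS : LS.rank = q - 1)
    (w : Fin n →₀ ℕ) (hw : ∑ i, w i = d) :
    algebraMap (MvPolynomial (Fin n) k) (FractionRing (MvPolynomial (Fin n) k))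
        (monomial w (1 : k)) ∈
      fractionFieldOf n k (Set.range fun j => monomial (v j) (1 : k)) := by
  classical
  rcases Nat.eq_zero_or_pos n with hn | hn
  · exfalso
    subst hn
    simp at hw
    omega
  have hq : 0 < q := by
    have hle := Matrix.rank_le_card_width (Matrix.of fun (i : Fin n) (j : Fin q) => ((v j) i : ℚ))
    rw [hrankA, Fintype.card_fin] at hle
    omega
  let Col := {t : (Fin n × Fin n) × (Fin q × Fin q) //
      Finsupp.single t.1.1 1 + v t.2.1 = Finsupp.single t.1.2 1 + v t.2.2}
  have hqconn := rank_graph_connected v LS (fun t : Col => t.1.1.1) (fun t : Col => t.1.1.2)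
    (fun t : Col => t.1.2.1) (fun t : Col => t.1.2.2) (fun t => t.2) (fun t j => hLS t j) hrankLS
  have hvconn := var_connected hd hq v hdeg (fun t : Col => t.1.1.1) (fun t : Col => t.1.1.2)
    (fun t : Col => t.1.2.1) (fun t : Col => t.1.2.2) (fun t => t.2) hqconn hrankA
  obtain ⟨p, N, hkey⟩ := exists_nat_comb hn v hdeg (fun t : Col => t.1.1.1)
    (fun t : Col => t.1.1.2) (fun t : Col => t.1.2.1) (fun t : Col => t.1.2.2)
    (fun t => t.2) hvconn ⟨0, hq⟩ w hw
  set f := algebraMap (MvPolynomial (Fin n) k) (FractionRing (MvPolynomial (Fin n) k)) with hf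
  set E := fractionFieldOf n k (Set.range fun j => monomial (v j) (1 : k)) with hE
  have hgen : ∀ j, f (monomial (v j) 1) ∈ E :=
    fun j => mem_fractionFieldOf_of_mem_adjoin (Algebra.subset_adjoin ⟨j, rfl⟩)
  have hprod : ∀ c : Fin q → ℕ,
      (∏ j, (monomial (v j) (1 : k)) ^ c j) = monomial (∑ j, c j • v j) 1 := by
    intro c
    rw [monomial_sum_one]
    exact Finset.prod_congr rfl fun j _ => by rw [monomial_pow, one_pow]
  have hmul : (monomial w (1 : k)) * ∏ j, (monomial (v j) 1) ^ N j
      = ∏ j, (monomial (v j) 1) ^ p j := by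
    rw [hprod, hprod, monomial_mul, one_mul, hkey]
  have hNne : f (∏ j, (monomial (v j) (1 : k)) ^ N j) ≠ 0 := by
    rw [hprod]
    refine (map_ne_zero_iff f (IsFractionRing.injective _ _)).2 ?_
    simp
  have hNmem : f (∏ j, (monomial (v j) (1 : k)) ^ N j) ∈ E := by
    rw [map_prod]
    exact prod_mem fun j _ => by rw [map_pow]; exact pow_mem (hgen j) _
  have hPmem : f (∏ j, (monomial (v j) (1 : k)) ^ p j) ∈ E := by
    rw [map_prod]
    exact prod_mem fun j _ => by rw [map_pow]; exact pow_mem (hgen j) _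
  have heq : f (monomial w 1) = f (∏ j, (monomial (v j) (1 : k)) ^ p j)
      * (f (∏ j, (monomial (v j) (1 : k)) ^ N j))⁻¹ := by
    rw [eq_mul_inv_iff_mul_eq₀ hNne, ← RingHom.map_mul, hmul]
  rw [heq]
  exact mul_mem hPmem (inv_mem hNmem)

open scoped Classical in
/-- Let `F = {x^{v_1},…,x^{v_q}}` be monomials of the same degree `d ≥ 2`.  If the
log-matrix `A` has rank `n` and the linear syzygy matrix `LS(F)` (with one column
`x_i e_j - x_k e_ℓ` for each relation `x_i x^{v_j} = x_k x^{v_ℓ}`) has rank `q - 1`,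
then `k[F] ⊆ k[x_d]` is a birational extension. -/
theorem stmt_11 (n q d : ℕ) (hd : 2 ≤ d) (k : Type*) [Field k]
    (v : Fin q → (Fin n →₀ ℕ)) (hv : Function.Injective v)
    (hdeg : ∀ j, ∑ i, v j i = d)
    (LS : Matrix (Fin q)
      {t : (Fin n × Fin n) × (Fin q × Fin q) //
        Finsupp.single t.1.1 1 + v t.2.1 = Finsupp.single t.1.2 1 + v t.2.2}
      (MvPolynomial (Fin n) k))
    (hLS : ∀ t j, LS j t =
      (if j = t.1.2.1 then X t.1.1.1 else 0) - (if j = t.1.2.2 then X t.1.1.2 else 0))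
    (hrankA : (Matrix.of fun (i : Fin n) (j : Fin q) => ((v j) i : ℚ)).rank = n)
    (hrankLS : LS.rank = q - 1) :
    fractionFieldOf n k (Set.range fun j => monomial (v j) (1 : k)) =
      fractionFieldOf n k
        {p | ∃ w : Fin n →₀ ℕ, (∑ i, w i) = d ∧ p = monomial w (1 : k)} := by
  apply le_antisymm
  · apply fractionFieldOf_mono
    rintro _ ⟨j, rfl⟩
    exact ⟨v j, hdeg j, rfl⟩
  · apply fractionFieldOf_le
    rintro _ ⟨w, hw, rfl⟩
    exact key_membership n q d hd k v hdeg LS hLS hrankA hrankLS w hw
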